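/- Let γ ∈ (0,1), b > 0, κ ∈ [0,1). Then for every t ∈ ℝ, lim_{a→0⁺} exp(−(b/a^γ)·((1 − e^{iat})/(1 − κe^{iat}))^γ) = exp(−(b/(1−κ)^γ)·(−it)^γ), where all complex powers are principal branch powers. Moreover (−it)^γ = |t|^γ cos(πγ/2)(1 − i·sgn(t)·tan(πγ/2)), so the limit is the characteristic function of a totally skewed stable law with index γ, skewness β = 1, and scale σ = (b/(1−κ)^γ)cos(πγ/2). -/

import Mathlib

open Complex

private lemma cpow_ofReal_mul' {r : ℝ} (hr : 0 < r) {x : ℂ} (hx : x ≠ 0) (γ : ℂ) :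
    ((r : ℂ) * x) ^ γ = (r : ℂ) ^ γ * x ^ γ := by
  have hr0 : (r : ℂ) ≠ 0 := ofReal_ne_zero.mpr hr.ne'
  rw [cpow_def_of_ne_zero (mul_ne_zero hr0 hx), cpow_def_of_ne_zero hr0,
    cpow_def_of_ne_zero hx, Complex.log_ofReal_mul hr hx, add_mul, Complex.exp_add,
    Complex.ofReal_log hr.le]

private lemma deriv_lim' (t : ℝ) :
    Filter.Tendsto (fun a : ℝ => (1 - Complex.exp (Complex.I * a * t)) / (a : ℂ))
      (nhdsWithin 0 (Set.Ioi (0:ℝ))) (nhds (-(Complex.I * t))) := by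
  have hd : HasDerivAt (fun a : ℝ => Complex.exp (Complex.I * a * t)) (Complex.I * t) 0 := by
    have h1 : HasDerivAt (fun a : ℝ => (Complex.I * a * t)) (Complex.I * t) 0 := by
      simpa using ((Complex.ofRealCLM.hasDerivAt (x := (0:ℝ))).const_mul Complex.I).mul_const (t : ℂ)
    simpa using h1.cexp
  have hs := hasDerivAt_iff_tendsto_slope.mp hd
  have hs' : Filter.Tendsto (slope (fun a : ℝ => Complex.exp (Complex.I * a * t)) 0)
      (nhdsWithin 0 (Set.Ioi (0:ℝ))) (nhds (Complex.I * t)) :=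
    hs.mono_left (nhdsWithin_mono 0 (fun x hx => ne_of_gt hx))
  refine hs'.neg.congr (fun a => ?_)
  simp only [slope, vsub_eq_sub, sub_zero, Complex.real_smul, Complex.ofReal_zero, mul_zero,
    zero_mul, Complex.exp_zero]
  push_cast
  ring

private lemma sin_ne_zero_of_mem {x : ℝ} (h0 : x ≠ 0) (h1 : |x| < Real.pi) :
    Real.sin x ≠ 0 := by
  intro h
  obtain ⟨n, hn⟩ := Real.sin_eq_zero_iff.mp h
  rcases eq_or_ne n 0 with rfl | hn0
  · simp at hn; exact h0 hn.symm
  · have : (1:ℝ) * Real.pi ≤ |(n:ℝ)| * Real.pi := by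
      apply mul_le_mul_of_nonneg_right _ Real.pi_pos.le
      exact_mod_cast Int.one_le_abs hn0
    rw [← hn, abs_mul, abs_of_pos Real.pi_pos] at h1
    linarith

private lemma cpow_identity (γ : ℝ) (hγ : γ ∈ Set.Ioo (0 : ℝ) 1) (t : ℝ) :
    (-(Complex.I * (t : ℂ))) ^ (γ : ℂ)
      = ((|t| ^ γ : ℝ) : ℂ) * ((Real.cos (Real.pi * γ / 2) : ℝ) : ℂ) *
        (1 - Complex.I * ((Real.sign t : ℝ) : ℂ) * ((Real.tan (Real.pi * γ / 2) : ℝ) : ℂ)) := by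
  obtain ⟨hγ0, hγ1⟩ := hγ
  have hγc : (γ : ℂ) ≠ 0 := by exact_mod_cast hγ0.ne'
  have hcpos : 0 < Real.cos (Real.pi * γ / 2) := by
    apply Real.cos_pos_of_mem_Ioo
    constructor <;> nlinarith [Real.pi_pos]
  have hct : Real.cos (Real.pi * γ / 2) * Real.tan (Real.pi * γ / 2)
      = Real.sin (Real.pi * γ / 2) := by
    rw [Real.tan_eq_sin_div_cos]; field_simp
  rcases lt_trichotomy t 0 with ht | rfl | ht
  · have hx : -(Complex.I * (t : ℂ)) = ((-t : ℝ) : ℂ) * Complex.I := by push_cast; ring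
    have hnt : (0:ℝ) < -t := by linarith
    rw [hx, cpow_def_of_ne_zero (mul_ne_zero (ofReal_ne_zero.mpr hnt.ne') I_ne_zero),
      Complex.log_ofReal_mul hnt I_ne_zero, Complex.log_I, add_mul, Complex.exp_add]
    have h1 : cexp ((Real.log (-t) : ℂ) * γ) = (((-t) ^ γ : ℝ) : ℂ) := by
      rw [Real.rpow_def_of_pos hnt, Complex.ofReal_exp]; push_cast; ring_nf
    have h2 : cexp (Real.pi / 2 * Complex.I * γ)
        = ((Real.cos (Real.pi * γ / 2) : ℝ) : ℂ) + ((Real.sin (Real.pi * γ / 2) : ℝ) : ℂ) * Complex.I := by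
      have : (Real.pi / 2 : ℂ) * Complex.I * γ = ((Real.pi * γ / 2 : ℝ) : ℂ) * Complex.I := by
        push_cast; ring
      rw [this, Complex.exp_mul_I]; push_cast; simp
    rw [h1, h2, Real.sign_of_neg ht, abs_of_neg ht, ← hct]
    push_cast
    ring
  · simp [Real.zero_rpow hγ0.ne', Complex.zero_cpow hγc]
  · have hx : -(Complex.I * (t : ℂ)) = ((t : ℝ) : ℂ) * (-Complex.I) := by push_cast; ring
    rw [hx, cpow_def_of_ne_zero (mul_ne_zero (ofReal_ne_zero.mpr ht.ne') (neg_ne_zero.mpr I_ne_zero)),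
      Complex.log_ofReal_mul ht (neg_ne_zero.mpr I_ne_zero), Complex.log_neg_I, add_mul,
      Complex.exp_add]
    have h1 : cexp ((Real.log t : ℂ) * γ) = ((t ^ γ : ℝ) : ℂ) := by
      rw [Real.rpow_def_of_pos ht, Complex.ofReal_exp]; push_cast; ring_nf
    have h2 : cexp (-(Real.pi / 2) * Complex.I * γ)
        = ((Real.cos (Real.pi * γ / 2) : ℝ) : ℂ) - ((Real.sin (Real.pi * γ / 2) : ℝ) : ℂ) * Complex.I := by
      have : (-(Real.pi / 2) : ℂ) * Complex.I * γ = ((-(Real.pi * γ / 2) : ℝ) : ℂ) * Complex.I := by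
        push_cast; ring
      rw [this, Complex.exp_mul_I]; push_cast; simp; ring
    rw [h1, h2, Real.sign_of_pos ht, abs_of_pos ht, ← hct]
    push_cast
    ring

private lemma pds_limit (γ b κ : ℝ)
    (hγ : γ ∈ Set.Ioo (0 : ℝ) 1) (hb : 0 < b) (hκ : κ ∈ Set.Ico (0 : ℝ) 1) (t : ℝ) :
    Filter.Tendsto
      (fun a : ℝ =>
        Complex.exp (-((b / a ^ γ : ℝ) : ℂ) *
          ((1 - Complex.exp (Complex.I * (a : ℂ) * (t : ℂ))) /
            (1 - (κ : ℂ) * Complex.exp (Complex.I * (a : ℂ) * (t : ℂ)))) ^ (γ : ℂ)))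
      (nhdsWithin 0 (Set.Ioi (0 : ℝ)))
      (nhds (Complex.exp (-((b / (1 - κ) ^ γ : ℝ) : ℂ) *
        (-(Complex.I * (t : ℂ))) ^ (γ : ℂ)))) := by
  obtain ⟨hγ0, hγ1⟩ := hγ
  obtain ⟨hκ0, hκ1⟩ := hκ
  have hγc : (γ : ℂ) ≠ 0 := by exact_mod_cast hγ0.ne'
  have h1κ : (0:ℝ) < 1 - κ := by linarith
  rcases eq_or_ne t 0 with rfl | ht
  · have : ∀ a : ℝ, Complex.exp (-((b / a ^ γ : ℝ) : ℂ) *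
        ((1 - Complex.exp (Complex.I * (a : ℂ) * ((0:ℝ) : ℂ))) /
          (1 - (κ : ℂ) * Complex.exp (Complex.I * (a : ℂ) * ((0:ℝ) : ℂ)))) ^ (γ : ℂ)) = 1 := by
      intro a
      simp [Complex.zero_cpow hγc]
    simp only [this]
    have : Complex.exp (-((b / (1 - κ) ^ γ : ℝ) : ℂ) * (-(Complex.I * ((0:ℝ) : ℂ))) ^ (γ : ℂ)) = 1 := by
      simp [Complex.zero_cpow hγc]
    rw [this]
    exact tendsto_const_nhds
  -- t ≠ 0
  have hden_ne : (1 : ℂ) - (κ : ℂ) ≠ 0 := by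
    intro h
    have : ((1 - κ : ℝ) : ℂ) = 0 := by push_cast; linear_combination h
    exact h1κ.ne' (by exact_mod_cast this)
  have hITne : -(Complex.I * (t : ℂ)) ≠ 0 :=
    neg_ne_zero.mpr (mul_ne_zero I_ne_zero (ofReal_ne_zero.mpr ht))
  -- limit of the denominator
  have hden : Filter.Tendsto (fun a : ℝ => 1 - (κ : ℂ) * Complex.exp (Complex.I * a * t))
      (nhdsWithin 0 (Set.Ioi (0:ℝ))) (nhds ((1 : ℂ) - (κ : ℂ))) := by
    have hc : Continuous (fun a : ℝ => 1 - (κ : ℂ) * Complex.exp (Complex.I * a * t)) := by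
      fun_prop
    exact (hc.tendsto' 0 _ (by simp)).mono_left
      (nhdsWithin_le_nhds (s := Set.Ioi (0:ℝ)))
  set L : ℂ := -(Complex.I * (t : ℂ)) / (1 - (κ : ℂ)) with hLdef
  have hz : Filter.Tendsto (fun a : ℝ =>
      ((1 - Complex.exp (Complex.I * a * t)) / (a : ℂ)) /
        (1 - (κ : ℂ) * Complex.exp (Complex.I * a * t)))
      (nhdsWithin 0 (Set.Ioi (0:ℝ))) (nhds L) :=
    (deriv_lim' t).div hden hden_ne
  have hLeq : L = (((1 - κ)⁻¹ : ℝ) : ℂ) * (-(Complex.I * (t : ℂ))) := by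
    rw [hLdef]; push_cast; ring
  have hLslit : L ∈ Complex.slitPlane := by
    rw [Complex.mem_slitPlane_iff]
    right
    rw [hLeq]
    have him : ((((1 - κ)⁻¹ : ℝ) : ℂ) * -(Complex.I * (t:ℂ))).im = (1 - κ)⁻¹ * (-t) := by
      rw [Complex.im_ofReal_mul]; simp
    rw [him]
    exact mul_ne_zero (inv_ne_zero h1κ.ne') (neg_ne_zero.mpr ht)
  have hpow : Filter.Tendsto (fun a : ℝ =>
      (((1 - Complex.exp (Complex.I * a * t)) / (a : ℂ)) /
        (1 - (κ : ℂ) * Complex.exp (Complex.I * a * t))) ^ (γ : ℂ))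
      (nhdsWithin 0 (Set.Ioi (0:ℝ))) (nhds (L ^ (γ : ℂ))) :=
    (continuousAt_cpow_const hLslit).tendsto.comp hz
  have hfull : Filter.Tendsto (fun a : ℝ => Complex.exp (-(b : ℂ) *
      ((((1 - Complex.exp (Complex.I * a * t)) / (a : ℂ)) /
        (1 - (κ : ℂ) * Complex.exp (Complex.I * a * t))) ^ (γ : ℂ))))
      (nhdsWithin 0 (Set.Ioi (0:ℝ))) (nhds (Complex.exp (-(b : ℂ) * L ^ (γ : ℂ)))) :=
    Complex.continuous_exp.continuousAt.tendsto.comp (hpow.const_mul _)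
  -- identify the limit value
  have hLpow : -((b / (1 - κ) ^ γ : ℝ) : ℂ) * (-(Complex.I * (t : ℂ))) ^ (γ : ℂ)
      = -(b : ℂ) * L ^ (γ : ℂ) := by
    rw [hLeq, cpow_ofReal_mul' (inv_pos.mpr h1κ) hITne,
      ← Complex.ofReal_cpow (inv_nonneg.mpr h1κ.le), Real.inv_rpow h1κ.le]
    push_cast [div_eq_mul_inv]
    ring
  rw [hLpow]
  -- eventual equality
  refine hfull.congr' ?_
  filter_upwards [Ioo_mem_nhdsGT (div_pos Real.pi_pos (abs_pos.mpr ht))] with a ha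
  obtain ⟨ha0, haπ⟩ := ha
  have hIat : Complex.I * (a : ℂ) * (t : ℂ) = ((a * t : ℝ) : ℂ) * Complex.I := by
    push_cast; ring
  have hsin : Real.sin (a * t) ≠ 0 := by
    apply sin_ne_zero_of_mem (mul_ne_zero ha0.ne' ht)
    rw [abs_mul, abs_of_pos ha0]
    calc a * |t| < Real.pi / |t| * |t| := by
          exact mul_lt_mul_of_pos_right haπ (abs_pos.mpr ht)
      _ = Real.pi := by field_simp
  have hnum_ne : (1 : ℂ) - Complex.exp (Complex.I * a * t) ≠ 0 := by
    intro h
    apply hsin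
    have hE : Complex.exp (Complex.I * a * t) = 1 := by linear_combination -h
    have := congrArg Complex.im hE
    rwa [hIat, Complex.exp_ofReal_mul_I_im, Complex.one_im] at this
  have hden_ne' : (1 : ℂ) - (κ : ℂ) * Complex.exp (Complex.I * a * t) ≠ 0 := by
    intro h
    have hE : (κ : ℂ) * Complex.exp (Complex.I * a * t) = 1 := by linear_combination -h
    have := congrArg (fun z : ℂ => ‖z‖) hE
    rw [norm_mul, hIat, Complex.norm_exp_ofReal_mul_I, Complex.norm_real, Real.norm_eq_abs,
      _root_.abs_of_nonneg hκ0, mul_one, norm_one] at this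
    linarith
  have hw_ne : (1 - Complex.exp (Complex.I * a * t)) /
      (1 - (κ : ℂ) * Complex.exp (Complex.I * a * t)) ≠ 0 :=
    div_ne_zero hnum_ne hden_ne'
  have hz_eq : ((1 - Complex.exp (Complex.I * a * t)) / (a : ℂ)) /
        (1 - (κ : ℂ) * Complex.exp (Complex.I * a * t))
      = ((a⁻¹ : ℝ) : ℂ) * ((1 - Complex.exp (Complex.I * a * t)) /
        (1 - (κ : ℂ) * Complex.exp (Complex.I * a * t))) := by
    push_cast; ring
  congr 1
  rw [hz_eq, cpow_ofReal_mul' (inv_pos.mpr ha0) hw_ne,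
    ← Complex.ofReal_cpow (inv_nonneg.mpr ha0.le), Real.inv_rpow ha0.le]
  push_cast [div_eq_mul_inv]
  ring


open Filter in
/-- Continuous analogy for `PDS(γ, b/a^γ, κ)`: as `a → 0⁺` the characteristic
function of the rescaled variable converges to that of a totally skewed
`γ`-stable law, `exp(-(b/(1-κ)^γ)(-it)^γ)`, and
`(-it)^γ = |t|^γ cos(πγ/2)(1 - i sgn(t) tan(πγ/2))` (principal branch). -/
theorem pds_continuous_analogy (γ b κ : ℝ)
    (hγ : γ ∈ Set.Ioo (0 : ℝ) 1) (hb : 0 < b) (hκ : κ ∈ Set.Ico (0 : ℝ) 1) (t : ℝ) :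
    Filter.Tendsto
      (fun a : ℝ =>
        Complex.exp (-((b / a ^ γ : ℝ) : ℂ) *
          ((1 - Complex.exp (Complex.I * (a : ℂ) * (t : ℂ))) /
            (1 - (κ : ℂ) * Complex.exp (Complex.I * (a : ℂ) * (t : ℂ)))) ^ (γ : ℂ)))
      (nhdsWithin 0 (Set.Ioi (0 : ℝ)))
      (nhds (Complex.exp (-((b / (1 - κ) ^ γ : ℝ) : ℂ) *
        (-(Complex.I * (t : ℂ))) ^ (γ : ℂ)))) ∧
    (-(Complex.I * (t : ℂ))) ^ (γ : ℂ)
      = ((|t| ^ γ : ℝ) : ℂ) * ((Real.cos (Real.pi * γ / 2) : ℝ) : ℂ) *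
        (1 - Complex.I * ((Real.sign t : ℝ) : ℂ) * ((Real.tan (Real.pi * γ / 2) : ℝ) : ℂ)) :=
  ⟨pds_limit γ b κ hγ hb hκ t, cpow_identity γ hγ t⟩
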